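/- Let T be a generalized ℱ-flipped interval exchange transformation with defining open intervals I_e, e ∈ 𝒜. Then the natural coding language L(T) satisfies the ℱ-flipped order condition determined by the orders <_D (left-to-right order of the intervals I_e) and <_A (left-to-right order of the intervals TI_e). -/

import Mathlib

open List Set

variable {A : Type*}

/-- A (factorial, extendable) language over an alphabet `A`. -/
def IsLanguage (L : Set (List A)) : Prop :=
  (∀ w ∈ L, ∀ v : List A, v <:+: w → v ∈ L) ∧
  (∀ w ∈ L, ∃ a : A, a :: w ∈ L) ∧
  (∀ w ∈ L, ∃ a : A, w ++ [a] ∈ L)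

/-- Arrival set `A(w)`. -/
def arrSet (L : Set (List A)) (w : List A) : Set A := {a | a :: w ∈ L}

/-- Departure set `D(w)`. -/
def depSet (L : Set (List A)) (w : List A) : Set A := {a | w ++ [a] ∈ L}

def Bispecial (L : Set (List A)) (w : List A) : Prop :=
  1 < (arrSet L w).ncard ∧ 1 < (depSet L w).ncard

/-- `m(w) = #{awb ∈ L}`. -/
noncomputable def extCount (L : Set (List A)) (w : List A) : ℕ :=
  {p : A × A | p.1 :: (w ++ [p.2]) ∈ L}.ncard

def StrongBispecial (L : Set (List A)) (w : List A) : Prop :=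
  Bispecial L w ∧ (arrSet L w).ncard + (depSet L w).ncard - 1 < extCount L w

def WeakBispecial (L : Set (List A)) (w : List A) : Prop :=
  Bispecial L w ∧ extCount L w < (arrSet L w).ncard + (depSet L w).ncard - 1

def LocallyStrongBispecial (L : Set (List A)) (w : List A) : Prop :=
  Bispecial L w ∧ ∃ A' D' : Set A, A'.Nonempty ∧ D'.Nonempty ∧
    A' ⊆ arrSet L w ∧ D' ⊆ depSet L w ∧
    A'.ncard + D'.ncard - 1 <
      {p : A × A | p.1 ∈ A' ∧ p.2 ∈ D' ∧ p.1 :: (w ++ [p.2]) ∈ L}.ncard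

/-- The order condition at a single bispecial word, for orders `rA`, `rD`. -/
def OrderConditionAt (L : Set (List A)) (w : List A) (rA rD : A → A → Prop) : Prop :=
  ∀ a b c d : A, a ≠ b → c ≠ d →
    a :: (w ++ [c]) ∈ L → b :: (w ++ [d]) ∈ L → (rA a b ↔ rD c d)

/-- The local order condition. -/
def LocalOrderCondition (L : Set (List A)) : Prop :=
  ∀ w : List A, Bispecial L w → ∃ rA rD : A → A → Prop,
    IsStrictTotalOrder A rA ∧ IsStrictTotalOrder A rD ∧ OrderConditionAt L w rA rD

/-- `a` and `a'` are consecutive in the strict order `r`. -/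
def ConsecutiveIn (r : A → A → Prop) (a a' : A) : Prop :=
  r a a' ∧ ∀ c : A, ¬ (r a c ∧ r c a')

/-- A connection for the bispecial word `w`, with respect to orders `rA`, `rD`. -/
def ConnectionWith (L : Set (List A)) (w : List A) (rA rD : A → A → Prop) : Prop :=
  ∃ a a' b b' : A, ConsecutiveIn rA a a' ∧ ConsecutiveIn rD b b' ∧
    a :: (w ++ [b]) ∈ L ∧ a' :: (w ++ [b']) ∈ L ∧
    a :: (w ++ [b']) ∉ L ∧ a' :: (w ++ [b]) ∉ L

/-- `w` has a connection (for some orders realizing the order condition at `w`). -/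
def HasConnection (L : Set (List A)) (w : List A) : Prop :=
  ∃ rA rD : A → A → Prop, IsStrictTotalOrder A rA ∧ IsStrictTotalOrder A rD ∧
    OrderConditionAt L w rA rD ∧ ConnectionWith L w rA rD

/-- Complexity function `p(n)`. -/
noncomputable def complexityFn (L : Set (List A)) (n : ℕ) : ℕ :=
  {w ∈ L | w.length = n}.ncard

def UniformlyRecurrent (L : Set (List A)) : Prop :=
  ∀ v ∈ L, ∃ n : ℕ, ∀ u ∈ L, u.length = n → v <:+: u

def LangRecurrent (L : Set (List A)) : Prop :=
  ∀ v ∈ L, ∃ u : List A, u ≠ [] ∧ v ++ u ∈ L ∧ v <:+ v ++ u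

def LangAperiodic (L : Set (List A)) : Prop :=
  ∀ w ∈ L, w ≠ [] → ∃ n : ℕ, (List.replicate n w).flatten ∉ L

def LeftSpecial (L : Set (List A)) (w : List A) : Prop := 1 < (arrSet L w).ncard

def RightSpecial (L : Set (List A)) (w : List A) : Prop := 1 < (depSet L w).ncard

/-- The two-sided subshift associated to `L`. -/
def XL (L : Set (List A)) : Set (ℤ → A) :=
  {x | ∀ (m : ℤ) (n : ℕ), (List.ofFn fun i : Fin n => x (m + (i : ℕ))) ∈ L}

def occursAtZ (x : ℤ → A) (m : ℤ) (w : List A) : Prop :=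
  (List.ofFn fun i : Fin w.length => x (m + (i : ℕ))) = w

def FactorsZ (x : ℤ → A) : Set (List A) := {w | ∃ m : ℤ, occursAtZ x m w}

def RightRec (x : ℤ → A) : Prop :=
  ∀ w ∈ FactorsZ x, ∀ N : ℤ, ∃ m : ℤ, N ≤ m ∧ occursAtZ x m w

def LeftRec (x : ℤ → A) : Prop :=
  ∀ w ∈ FactorsZ x, ∀ N : ℤ, ∃ m : ℤ, m ≤ N ∧ occursAtZ x m w

def RecurrentZ (x : ℤ → A) : Prop := RightRec x ∧ LeftRec x

/-- The `F`-flipped order condition, with orders `rA` (arrival) and `rD` (departure):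
the departure order is reversed when the number of `F`-letters of `w` is odd. -/
def FlippedOC [DecidableEq A] (L : Set (List A)) (F : Finset A)
    (rA rD : A → A → Prop) : Prop :=
  ∀ w : List A, Bispecial L w → ∀ a b c d : A, a ≠ b → c ≠ d →
    a :: (w ++ [c]) ∈ L → b :: (w ++ [d]) ∈ L →
    (rA a b ↔ if Even (w.countP fun e => decide (e ∈ F)) then rD c d else rD d c)

/-- A generalized `F`-flipped interval exchange transformation. -/
structure GIET (A : Type*) (F : Finset A) where
  l : A → ℝ
  r : A → ℝ
  T : ℝ → ℝ
  lt : ∀ e, l e < r e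
  sub : ∀ e, Set.Ioo (l e) (r e) ⊆ Set.Ioo (0 : ℝ) 1
  disj : ∀ e f, e ≠ f → Disjoint (Set.Ioo (l e) (r e)) (Set.Ioo (l f) (r f))
  cover : Set.Icc (0 : ℝ) 1 = ⋃ e, Set.Icc (l e) (r e)
  cont : ∀ e, ContinuousOn T (Set.Ioo (l e) (r e))
  inc : ∀ e ∉ F, StrictMonoOn T (Set.Ioo (l e) (r e))
  dec : ∀ e ∈ F, StrictAntiOn T (Set.Ioo (l e) (r e))
  l' : A → ℝ
  r' : A → ℝ
  lt' : ∀ e, l' e < r' e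
  img : ∀ e, T '' Set.Ioo (l e) (r e) = Set.Ioo (l' e) (r' e)
  disj' : ∀ e f, e ≠ f → Disjoint (Set.Ioo (l' e) (r' e)) (Set.Ioo (l' f) (r' f))
  cover' : Set.Icc (0 : ℝ) 1 = ⋃ e, Set.Icc (l' e) (r' e)

variable {F : Finset A}

/-- A bi-infinite orbit of `G`, with symbolic itinerary `u`. -/
def GIET.IsOrbit (G : GIET A F) (u : ℤ → A) (p : ℤ → ℝ) : Prop :=
  (∀ n : ℤ, G.T (p n) = p (n + 1)) ∧
  ∀ n : ℤ, p n ∈ Set.Ioo (G.l (u n)) (G.r (u n))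

/-- The natural coding `L(T)`: the language generated by all trajectories. -/
def GIET.lang (G : GIET A F) : Set (List A) :=
  {w | ∃ (u : ℤ → A) (p : ℤ → ℝ), G.IsOrbit u p ∧
    ∃ m : ℤ, (List.ofFn fun i : Fin w.length => u (m + (i : ℕ))) = w}


/-- Two disjoint nonempty open intervals: interval order iff point order. -/
lemma giet_sep {l1 r1 l2 r2 x y : ℝ} (hd : Disjoint (Set.Ioo l1 r1) (Set.Ioo l2 r2))
    (hx : x ∈ Set.Ioo l1 r1) (hy : y ∈ Set.Ioo l2 r2) : r1 ≤ l2 ↔ x < y := by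
  constructor
  · intro h; exact hx.2.trans (h.trans_lt hy.1)
  · intro hxy
    by_contra h
    push_neg at h
    rcases lt_or_ge l1 r2 with h2 | h2
    · have : max l1 l2 < min r1 r2 := by
        simp only [max_lt_iff, lt_min_iff]
        exact ⟨⟨hx.1.trans hx.2, h⟩, ⟨h2, hy.1.trans hy.2⟩⟩
      obtain ⟨z, hz⟩ := Set.nonempty_Ioo.2 this
      exact Set.disjoint_left.1 hd ⟨(le_max_left _ _).trans_lt hz.1, hz.2.trans_le (min_le_left _ _)⟩
        ⟨(le_max_right _ _).trans_lt hz.1, hz.2.trans_le (min_le_right _ _)⟩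
    · exact absurd hxy (not_lt.2 ((hy.2.trans_le h2).le.trans hx.1.le))

/-- Monotonicity of an iterate along a cylinder of the word `w`:
increasing iff the number of flipped letters in `w` is even. -/
lemma GIET.key [DecidableEq A] (G : GIET A F) : ∀ (w : List A) (f g : ℕ → ℝ),
    (∀ i, G.T (f i) = f (i+1)) → (∀ i, G.T (g i) = g (i+1)) →
    (∀ i (hi : i < w.length), f i ∈ Set.Ioo (G.l w[i]) (G.r w[i])) →
    (∀ i (hi : i < w.length), g i ∈ Set.Ioo (G.l w[i]) (G.r w[i])) →
    f 0 < g 0 →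
    (Even (w.countP fun e => decide (e ∈ F)) → f w.length < g w.length) ∧
    (¬ Even (w.countP fun e => decide (e ∈ F)) → g w.length < f w.length) := by
  intro w
  induction w with
  | nil =>
    intro f g _ _ _ _ hlt
    exact ⟨fun _ => hlt, fun h => absurd (by simp) h⟩
  | cons e w ih =>
    intro f g hTf hTg hf hg hlt
    have hf0 : f 0 ∈ Set.Ioo (G.l e) (G.r e) := by exact hf 0 (by simp)
    have hg0 : g 0 ∈ Set.Ioo (G.l e) (G.r e) := by exact hg 0 (by simp)
    have hf' : ∀ i (hi : i < w.length), f (i+1) ∈ Set.Ioo (G.l w[i]) (G.r w[i]) := by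
      intro i hi; exact hf (i+1) (by simpa using Nat.succ_lt_succ hi)
    have hg' : ∀ i (hi : i < w.length), g (i+1) ∈ Set.Ioo (G.l w[i]) (G.r w[i]) := by
      intro i hi; exact hg (i+1) (by simpa using Nat.succ_lt_succ hi)
    by_cases heF : e ∈ F
    · have h1 : g 1 < f 1 := by
        rw [← hTf 0, ← hTg 0]
        exact G.dec e heF hf0 hg0 hlt
      have IH := ih (fun i => g (i+1)) (fun i => f (i+1))
        (fun i => hTg (i+1)) (fun i => hTf (i+1)) hg' hf' h1
      have hc : (e :: w).countP (fun e => decide (e ∈ F)) =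
          (w.countP fun e => decide (e ∈ F)) + 1 := by
        simp [List.countP_cons, heF]
      rw [hc]
      simp only [List.length_cons, Nat.even_add_one]
      exact ⟨fun h => IH.2 (by simpa using h), fun h => IH.1 (by simpa using h)⟩
    · have h1 : f 1 < g 1 := by
        rw [← hTf 0, ← hTg 0]
        exact G.inc e heF hf0 hg0 hlt
      have IH := ih (fun i => f (i+1)) (fun i => g (i+1))
        (fun i => hTf (i+1)) (fun i => hTg (i+1)) hf' hg' h1
      have hc : (e :: w).countP (fun e => decide (e ∈ F)) =
          (w.countP fun e => decide (e ∈ F)) := by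
        simp [List.countP_cons, heF]
      rw [hc]
      exact IH

/-- From a word `a w c` in the language, extract a forward orbit segment. -/
lemma GIET.extract (G : GIET A F) {w : List A} {a c : A}
    (h : a :: (w ++ [c]) ∈ G.lang) :
    ∃ f : ℕ → ℝ, (∀ i, G.T (f i) = f (i+1)) ∧
      f 0 ∈ Set.Ioo (G.l' a) (G.r' a) ∧
      (∀ i (hi : i < w.length), f i ∈ Set.Ioo (G.l w[i]) (G.r w[i])) ∧
      f w.length ∈ Set.Ioo (G.l c) (G.r c) := by
  obtain ⟨u, p, horb, m, hm⟩ := h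
  have hu : ∀ i (hi : i < (a :: (w ++ [c])).length), u (m + i) = (a :: (w ++ [c]))[i] := by
    intro i hi
    rw [List.getElem_of_eq hm.symm hi, List.getElem_ofFn]
  refine ⟨fun i => p (m + 1 + i), ?_, ?_, ?_, ?_⟩
  · intro i
    have := horb.1 (m + 1 + i)
    rw [this]
    congr 1
    push_cast
    ring
  · have hua : u m = a := by simpa using hu 0 (by simp)
    have : p m ∈ Set.Ioo (G.l a) (G.r a) := by
      have := horb.2 m; rwa [hua] at this
    have : G.T (p m) ∈ Set.Ioo (G.l' a) (G.r' a) := by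
      rw [← G.img a]; exact ⟨p m, this, rfl⟩
    rw [horb.1 m] at this
    simpa using this
  · intro i hi
    have hui : u (m + 1 + i) = w[i] := by
      have h1 := hu (i+1) (by simp; omega)
      have h2 : (a :: (w ++ [c]))[i+1]'(by simp; omega) = w[i] := by
        simp [List.getElem_append_left, hi]
      rw [h2] at h1
      rw [← h1]
      congr 1
      push_cast
      ring
    have := horb.2 (m + 1 + i)
    rwa [hui] at this
  · have hui : u (m + 1 + w.length) = c := by
      have h1 := hu (w.length + 1) (by simp)
      have h2 : (a :: (w ++ [c]))[w.length + 1]'(by simp) = c := by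
        simp
      rw [h2] at h1
      rw [← h1]
      congr 1
      push_cast
      ring
    have := horb.2 (m + 1 + w.length)
    rwa [hui] at this


/-- the natural coding of a generalized `F`-flipped interval
exchange transformation satisfies the `F`-flipped order condition determined by
the left-to-right order `<_D` of the intervals `I_e` and the left-to-right
order `<_A` of the intervals `T I_e`. -/
theorem stmt16 [Fintype A] [DecidableEq A] (F : Finset A) (G : GIET A F) :
    FlippedOC G.lang F
      (fun e f => G.r' e ≤ G.l' f)   -- e <_A f : T I_e strictly left of T I_f
      (fun e f => G.r e ≤ G.l f)     -- e <_D f : I_e strictly left of I_f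
    := by
  intro w _ a b c d hab hcd ha hb
  obtain ⟨f, hTf, hf0, hfI, hfn⟩ := G.extract ha
  obtain ⟨g, hTg, hg0, hgI, hgn⟩ := G.extract hb
  have hA : G.r' a ≤ G.l' b ↔ f 0 < g 0 := giet_sep (G.disj' a b hab) hf0 hg0
  have hD : G.r c ≤ G.l d ↔ f w.length < g w.length := giet_sep (G.disj c d hcd) hfn hgn
  have hD' : G.r d ≤ G.l c ↔ g w.length < f w.length := giet_sep (G.disj d c hcd.symm) hgn hfn
  have hne : f 0 ≠ g 0 := by
    intro h
    exact Set.disjoint_left.1 (G.disj' a b hab) hf0 (h ▸ hg0)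
  by_cases hev : Even (w.countP fun e => decide (e ∈ F))
  · simp only [hev, if_pos, hA, hD]
    constructor
    · intro h; exact (G.key w f g hTf hTg hfI hgI h).1 hev
    · intro h
      rcases hne.lt_or_gt with h' | h'
      · exact h'
      · exact absurd ((G.key w g f hTg hTf hgI hfI h').1 hev) (asymm h)
  · simp only [if_neg hev, hA, hD']
    constructor
    · intro h; exact (G.key w f g hTf hTg hfI hgI h).2 hev
    · intro h
      rcases hne.lt_or_gt with h' | h'
      · exact h'
      · exact absurd ((G.key w g f hTg hTf hgI hfI h').2 hev) (asymm h)
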